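/- With notation as in the second-moment lemma, the total lifted leakage satisfies L_{k'} ≤ 2^{2^k + k}/√(2^{k'} − 2^k). In particular, L_{k'} → 0 as k' → ∞. -/

import Mathlib

open Finset
open scoped Classical

noncomputable section

/-- Boolean functions `𝔽₂^k → {1,−1}`, encoded with `true ↦ −1` and `false ↦ 1`. -/
abbrev BF (k : ℕ) := (Fin k → ZMod 2) → Bool

/-- The real `±1`-valued function corresponding to a Boolean function. -/
def toReal {k : ℕ} (f : BF k) : (Fin k → ZMod 2) → ℝ := fun x => if f x then -1 else 1

/-- The character `χ_α(x) = (−1)^⟨α,x⟩` on `𝔽₂^k`. -/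
def chi {k : ℕ} (α x : Fin k → ZMod 2) : ℝ :=
  (-1 : ℝ) ^ (dotProduct α x).val

/-- The Fourier coefficient `f̂_α = 2^{−k} Σ_x χ_α(x) f(x)`. -/
def fhat {k : ℕ} (f : (Fin k → ZMod 2) → ℝ) (α : Fin k → ZMod 2) : ℝ :=
  (2 ^ k : ℝ)⁻¹ * ∑ x, chi α x * f x

/-- The supporting affine subspace `affine(f)` of a Boolean function `f`: the affine span of
its Fourier support, as a subset of `𝔽₂^k`. -/
def affSupp {k : ℕ} (f : BF k) : Set (Fin k → ZMod 2) :=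
  (affineSpan (ZMod 2) {α | fhat (toReal f) α ≠ 0} : Set (Fin k → ZMod 2))

/-- `dim(f)`: the dimension of the supporting affine subspace of `f`. -/
def dimB {k : ℕ} (f : BF k) : ℕ :=
  Module.finrank (ZMod 2) (affineSpan (ZMod 2) {α | fhat (toReal f) α ≠ 0}).direction

/-- Outflow of a flow `w` at node `f` for source/sink placement `g`. -/
def outflow {k : ℕ} (w : BF k → BF k → BF k → ℝ) (f g : BF k) : ℝ := ∑ f₂, w f f₂ g

/-- Inflow of a flow `w` at node `f` for source/sink placement `g`. -/
def inflow {k : ℕ} (w : BF k → BF k → BF k → ℝ) (f g : BF k) : ℝ := ∑ f₂, w f₂ f g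

/-- The signed leak `leak_w(f,g) = inflow_w(f,g) − outflow_w(f,g)`. -/
def leak {k : ℕ} (w : BF k → BF k → BF k → ℝ) (f g : BF k) : ℝ :=
  inflow w f g - outflow w f g

/-- `g'` agrees with `g` on the supporting affine subspace of `f`. -/
def agrees {k : ℕ} (f g g' : BF k) : Prop := ∀ x ∈ affSupp f, g' x = g x

/-- `w` is an infinity relaxed flow of the gadget `G`: it is nonnegative, satisfies the
capacity constraints, and for every `f` with `dim(f) ≥ 1` and every placement `g`, total
outflow equals total inflow when summed over all placements agreeing with `g` on
`affine(f)`. -/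
def InfinityRelaxedFlow {k : ℕ} (G : BF k → BF k → ℝ) (w : BF k → BF k → BF k → ℝ) : Prop :=
  (∀ f₁ f₂ g, 0 ≤ w f₁ f₂ g) ∧
  (∀ f₁ f₂ g, w f₁ f₂ g + w f₂ f₁ g ≤ G f₁ f₂) ∧
  ∀ g f, 1 ≤ dimB f →
    (∑ g' ∈ univ.filter (agrees f g), outflow w f g')
      = ∑ g' ∈ univ.filter (agrees f g), inflow w f g'

/-- Parameters `(A, b, β, c)` of an affine lift `M_{A,b,β,c} ∈ M_{k→k'}`, `A` of full rank. -/
def MParam (k k' : ℕ) :=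
  {p : Matrix (Fin k) (Fin k') (ZMod 2) × (Fin k → ZMod 2) × (Fin k' → ZMod 2) × ZMod 2 //
    p.1.rank = k}

/-- The affine lift `M(f)(y) = f(Ay+b)(−1)^c χ_β(y)` acting on Boolean functions:
the value at `y` is flipped exactly when `c + ⟨β,y⟩ = 1`. -/
def applyB {k k' : ℕ} (p : MParam k k') (f : BF k) : BF k' :=
  fun y => xor (f (p.1.1.mulVec y + p.1.2.1))
    (decide (p.1.2.2.2 + dotProduct p.1.2.2.1 y = 1))

/-- The dual map `M^# = M_{Aᵀ,β,b,c} : F_{k'} → F_k`, sending a placement `g'` to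
`α ↦ g'(Aᵀα+β)(−1)^c χ_b(α)`. -/
def sharpB {k k' : ℕ} (p : MParam k k') (g' : BF k') : BF k :=
  fun α => xor (g' (Matrix.vecMul α p.1.1 + p.1.2.2.1))
    (decide (p.1.2.2.2 + dotProduct p.1.2.1 α = 1))


/-- The leak of the full lift `w' = lift_{k→k'}(w)` at node `f'` and placement `g'`:
`leak_{w'}(f',g') = |M_{k→k'}|⁻¹ Σ_{M ∈ M_{k→k'}} Σ_{f : M(f)=f'} leak_w(f, M^#(g'))`. -/
def leakLift (k k' : ℕ) (w : BF k → BF k → BF k → ℝ) (f' g' : BF k') : ℝ :=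
  (Nat.card (MParam k k') : ℝ)⁻¹ *
    ∑ᶠ p : MParam k k',
      ∑ f ∈ univ.filter (fun f : BF k => applyB p f = f'), leak w f (sharpB p g')

/-- The total lifted leakage
`L_{k'} = E_{g' ∈ F_{k'}} Σ_{f' : dim(f') > 0} |leak_{w'}(f',g')|`. -/
def Ltot (k k' : ℕ) (w : BF k → BF k → BF k → ℝ) : ℝ :=
  (Fintype.card (BF k') : ℝ)⁻¹ *
    ∑ g' : BF k', ∑ f' ∈ univ.filter (fun f' : BF k' => 0 < dimB f'),
      |leakLift k k' w f' g'|

namespace TLB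




/-- the sign character of `ZMod 2` -/
def ee (a : ZMod 2) : ℝ := (-1 : ℝ) ^ a.val

lemma zmod2_cases (a : ZMod 2) : a = 0 ∨ a = 1 := by revert a; decide

lemma ee_zero : ee 0 = 1 := by simp [ee]

lemma ee_one : ee 1 = -1 := by norm_num [ee, ZMod.val_one]

lemma ee_add (a b : ZMod 2) : ee (a + b) = ee a * ee b := by
  rcases zmod2_cases a with ha | ha <;> rcases zmod2_cases b with hb | hb <;>
    (subst ha; subst hb)
  · simp [ee_zero]
  · simp [ee_zero]
  · simp [ee_zero]
  · rw [show ((1:ZMod 2) + 1) = 0 from by decide, ee_zero, ee_one]; norm_num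

lemma ee_ne_zero (a : ZMod 2) : ee a ≠ 0 := by
  rcases zmod2_cases a with h | h <;> subst h <;> simp [ee_zero, ee_one]

lemma abs_ee (a : ZMod 2) : |ee a| = 1 := by
  rcases zmod2_cases a with h | h <;> subst h <;> simp [ee_zero, ee_one]

lemma chi_eq_ee {k : ℕ} (α x : Fin k → ZMod 2) : chi α x = ee (dotProduct α x) := rfl

lemma card_vec (n : ℕ) : Fintype.card (Fin n → ZMod 2) = 2 ^ n := by simp

lemma vec_add_self {n : ℕ} (v : Fin n → ZMod 2) : v + v = 0 := by
  funext i
  rcases zmod2_cases (v i) with h | h <;>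
    simp only [Pi.add_apply, Pi.zero_apply, h] <;> decide

lemma vec_add_eq_zero_iff {n : ℕ} (v w : Fin n → ZMod 2) : v + w = 0 ↔ v = w := by
  constructor
  · intro h
    have h2 : v + w + w = 0 + w := by rw [h]
    rwa [add_assoc, vec_add_self, add_zero, zero_add] at h2
  · rintro rfl; exact vec_add_self v

lemma sum_ee_dot (n : ℕ) (z : Fin n → ZMod 2) :
    ∑ α : Fin n → ZMod 2, ee (dotProduct α z) = if z = 0 then (2 ^ n : ℝ) else 0 := by
  by_cases hz : z = 0
  · subst hz
    simp [dotProduct_zero, ee_zero, card_vec]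
  · rw [if_neg hz]
    obtain ⟨i₀, hi₀⟩ : ∃ i₀, z i₀ ≠ 0 := by
      by_contra h
      push_neg at h
      exact hz (funext h)
    have hz1 : z i₀ = 1 := by
      rcases zmod2_cases (z i₀) with h | h
      · exact absurd h hi₀
      · exact h
    set v : Fin n → ZMod 2 := Pi.single i₀ 1 with hv
    have hvz : dotProduct v z = 1 := by
      rw [hv, single_dotProduct, hz1, mul_one]
    have key : ∀ α : Fin n → ZMod 2,
        ee (dotProduct (v + α) z) = - ee (dotProduct α z) := by
      intro α
      rw [add_dotProduct, ee_add, hvz, ee_one]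
      ring
    have h3 : (∑ α : Fin n → ZMod 2, ee (dotProduct α z))
        = - ∑ α : Fin n → ZMod 2, ee (dotProduct α z) := by
      calc (∑ α : Fin n → ZMod 2, ee (dotProduct α z))
          = ∑ α : Fin n → ZMod 2, ee (dotProduct (v + α) z) :=
            (Fintype.sum_equiv (Equiv.addLeft v) _ _ (fun α => rfl)).symm
        _ = ∑ α : Fin n → ZMod 2, - ee (dotProduct α z) :=
            Finset.sum_congr rfl (fun α _ => key α)
        _ = - ∑ α : Fin n → ZMod 2, ee (dotProduct α z) := Finset.sum_neg_distrib _
    linarith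

lemma inversion {n : ℕ} (F : (Fin n → ZMod 2) → ℝ) (x : Fin n → ZMod 2) :
    ∑ α, fhat F α * chi α x = F x := by
  have step1 : ∀ α : Fin n → ZMod 2, fhat F α * chi α x
      = (2 ^ n : ℝ)⁻¹ * ∑ y, F y * ee (dotProduct α (y + x)) := by
    intro α
    rw [fhat, chi_eq_ee, mul_comm _ (ee _), ← mul_assoc, mul_comm (ee _), mul_assoc,
      Finset.mul_sum]
    congr 1
    refine Finset.sum_congr rfl (fun y _ => ?_)
    rw [dotProduct_add, ee_add, chi_eq_ee]
    ring
  calc ∑ α, fhat F α * chi α x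
      = (2 ^ n : ℝ)⁻¹ * ∑ α : Fin n → ZMod 2, ∑ y, F y * ee (dotProduct α (y + x)) := by
        rw [Finset.sum_congr rfl (fun α _ => step1 α), ← Finset.mul_sum]
    _ = (2 ^ n : ℝ)⁻¹ * ∑ y : Fin n → ZMod 2, F y *
          ∑ α : Fin n → ZMod 2, ee (dotProduct α (y + x)) := by
        rw [Finset.sum_comm]
        congr 1
        exact Finset.sum_congr rfl (fun y _ => by rw [Finset.mul_sum])
    _ = (2 ^ n : ℝ)⁻¹ * ∑ y : Fin n → ZMod 2, F y * (if y = x then (2^n : ℝ) else 0) := by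
        congr 1
        refine Finset.sum_congr rfl (fun y _ => ?_)
        rw [sum_ee_dot]
        by_cases hyx : y = x
        · rw [if_pos (by rw [hyx]; exact vec_add_self x), if_pos hyx]
        · rw [if_neg (fun hc => hyx ((vec_add_eq_zero_iff y x).1 hc)), if_neg hyx]
    _ = F x := by
        simp only [mul_ite, mul_zero]
        rw [Finset.sum_ite_eq' Finset.univ x (fun y => F y * (2^n:ℝ))]
        simp only [Finset.mem_univ, if_true]
        field_simp

lemma toReal_inj {n : ℕ} {f g : BF n} (h : toReal f = toReal g) : f = g := by
  funext x
  have hx := congrFun h x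
  by_cases hf : f x <;> by_cases hg : g x <;>
    simp only [toReal, hf, hg, if_true, if_false] at hx ⊢ <;> first | rfl | norm_num at hx

lemma eq_of_fhat_eq {n : ℕ} {f g : BF n}
    (h : ∀ α, fhat (toReal f) α = fhat (toReal g) α) : f = g := by
  apply toReal_inj
  funext x
  rw [← inversion (toReal f) x, ← inversion (toReal g) x]
  exact Finset.sum_congr rfl (fun α _ => by rw [h α])

lemma exists_fhat_ne_zero {n : ℕ} (f : BF n) : ∃ α, fhat (toReal f) α ≠ 0 := by
  by_contra h
  push_neg at h
  have h0 : toReal f 0 = 0 := by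
    rw [← inversion (toReal f) 0]
    exact Finset.sum_eq_zero (fun α _ => by rw [h α, zero_mul])
  by_cases hf : f 0 <;> simp only [toReal, hf, if_true, if_false] at h0 <;> norm_num at h0


section Lift

variable {k k' : ℕ}

instance instFintypeMParam (k k' : ℕ) : Fintype (MParam k k') := by
  unfold MParam; infer_instance

/-- the dual affine map `α ↦ Aᵀα + β`. -/
def tau (p : MParam k k') (α : Fin k → ZMod 2) : Fin k' → ZMod 2 :=
  Matrix.vecMul α p.1.1 + p.1.2.2.1

lemma sharpB_eq (p : MParam k k') (g' : BF k') (α : Fin k → ZMod 2) :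
    sharpB p g' α
      = xor (g' (tau p α)) (decide (p.1.2.2.2 + dotProduct p.1.2.1 α = 1)) := rfl

lemma tau_inj (p : MParam k k') : Function.Injective (tau p) := by
  have hrank : p.1.1.transpose.rank = k := by rw [Matrix.rank_transpose]; exact p.2
  have hfin : Module.finrank (ZMod 2) (LinearMap.range p.1.1.transpose.mulVecLin) = k := hrank
  have hker : LinearMap.ker p.1.1.transpose.mulVecLin = ⊥ := by
    have := LinearMap.finrank_range_add_finrank_ker p.1.1.transpose.mulVecLin
    rw [hfin, Module.finrank_pi (ZMod 2)] at this
    simp only [Fintype.card_fin] at this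
    have h0 : Module.finrank (ZMod 2) (LinearMap.ker p.1.1.transpose.mulVecLin) = 0 := by omega
    exact (Submodule.finrank_eq_zero).1 h0
  have hinj : Function.Injective p.1.1.transpose.mulVecLin := LinearMap.ker_eq_bot.1 hker
  intro a b hab
  apply hinj
  have hab2 : Matrix.vecMul a p.1.1 = Matrix.vecMul b p.1.1 := by
    have := hab
    unfold tau at this
    exact add_right_cancel this
  simp only [Matrix.mulVecLin_apply, Matrix.mulVec_transpose]
  exact hab2

lemma toReal_xor (a b : Bool) :
    (if (xor a b) then (-1:ℝ) else 1) = (if a then (-1:ℝ) else 1) * (if b then (-1:ℝ) else 1) := by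
  cases a <;> cases b <;> norm_num

lemma decide_eq_ee (cst : ZMod 2) : (if (decide (cst = 1)) then (-1:ℝ) else 1) = ee cst := by
  rcases zmod2_cases cst with h | h <;> subst h <;>
    simp [ee_zero, ee_one, show ¬((0:ZMod 2) = 1) from by decide]

lemma toReal_applyB (p : MParam k k') (f : BF k) (y : Fin k' → ZMod 2) :
    toReal (applyB p f) y
      = toReal f (p.1.1.mulVec y + p.1.2.1)
          * ee (p.1.2.2.2 + dotProduct p.1.2.2.1 y) := by
  simp only [toReal, applyB]
  rw [← decide_eq_ee]
  by_cases ha : f (p.1.1.mulVec y + p.1.2.1) = true <;>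
    by_cases hb : p.1.2.2.2 + dotProduct p.1.2.2.1 y = 1 <;> simp [ha, hb]

lemma fhat_applyB (p : MParam k k') (f : BF k) (γ : Fin k' → ZMod 2) :
    fhat (toReal (applyB p f)) γ
      = ∑ α, fhat (toReal f) α * ee (dotProduct α p.1.2.1 + p.1.2.2.2)
          * (if γ = tau p α then 1 else 0) := by
  have hterm : ∀ y : Fin k' → ZMod 2,
      chi γ y * toReal (applyB p f) y
        = ∑ α, fhat (toReal f) α * ee (dotProduct α p.1.2.1 + p.1.2.2.2)
            * ee (dotProduct (γ + Matrix.vecMul α p.1.1 + p.1.2.2.1) y) := by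
    intro y
    rw [toReal_applyB, ← inversion (toReal f) (p.1.1.mulVec y + p.1.2.1), Finset.sum_mul,
      Finset.mul_sum]
    refine Finset.sum_congr rfl (fun α _ => ?_)
    simp only [chi_eq_ee, dotProduct_add, Matrix.dotProduct_mulVec,
      add_dotProduct, ee_add]
    ring
  rw [fhat, Finset.sum_congr rfl (fun y _ => hterm y), Finset.sum_comm, Finset.mul_sum]
  refine Finset.sum_congr rfl (fun α _ => ?_)
  rw [← Finset.mul_sum, Finset.sum_congr rfl
    (fun y (_ : y ∈ Finset.univ) => by
      rw [dotProduct_comm] :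
      ∀ y ∈ Finset.univ, ee (dotProduct (γ + Matrix.vecMul α p.1.1 + p.1.2.2.1) y)
        = ee (dotProduct y (γ + Matrix.vecMul α p.1.1 + p.1.2.2.1))), sum_ee_dot]
  have hcond : (γ + Matrix.vecMul α p.1.1 + p.1.2.2.1 = 0) ↔ (γ = tau p α) := by
    rw [add_assoc, vec_add_eq_zero_iff]
    exact Iff.rfl
  by_cases hc : γ = tau p α
  · rw [if_pos (hcond.2 hc), if_pos hc]
    field_simp
  · rw [if_neg (fun hh => hc (hcond.1 hh)), if_neg hc]
    ring

lemma fhat_applyB_at (p : MParam k k') (f : BF k) (α₀ : Fin k → ZMod 2) :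
    fhat (toReal (applyB p f)) (tau p α₀)
      = fhat (toReal f) α₀ * ee (dotProduct α₀ p.1.2.1 + p.1.2.2.2) := by
  rw [fhat_applyB]
  rw [Finset.sum_eq_single α₀]
  · rw [if_pos rfl, mul_one]
  · intro α _ hne
    rw [if_neg (fun hh => hne (tau_inj p hh.symm)), mul_zero]
  · intro h; exact absurd (Finset.mem_univ α₀) h

lemma fhat_applyB_supp {p : MParam k k'} {f : BF k} {γ : Fin k' → ZMod 2}
    (h : fhat (toReal (applyB p f)) γ ≠ 0) :
    ∃ α, fhat (toReal f) α ≠ 0 ∧ γ = tau p α := by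
  by_contra hc
  push_neg at hc
  apply h
  rw [fhat_applyB]
  refine Finset.sum_eq_zero (fun α _ => ?_)
  by_cases h1 : fhat (toReal f) α = 0
  · rw [h1, zero_mul, zero_mul]
  · rw [if_neg (hc α h1), mul_zero]

end Lift


section Aff

variable {k k' : ℕ}

/-- `tau` as an affine map. -/
def tauAff (p : MParam k k') : (Fin k → ZMod 2) →ᵃ[ZMod 2] (Fin k' → ZMod 2) where
  toFun := tau p
  linear := Matrix.vecMulLinear p.1.1
  map_vadd' := by
    intro q v
    show tau p (v + q) = Matrix.vecMul v p.1.1 + tau p q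
    simp only [tau, Matrix.add_vecMul]
    abel

lemma tauAff_apply (p : MParam k k') (α : Fin k → ZMod 2) : tauAff p α = tau p α := rfl

lemma span_le_map {f : BF k} {f' : BF k'} {p : MParam k k'} (hpf : applyB p f = f') :
    affineSpan (ZMod 2) {γ | fhat (toReal f') γ ≠ 0}
      ≤ (affineSpan (ZMod 2) {α | fhat (toReal f) α ≠ 0}).map (tauAff p) := by
  apply affineSpan_le.2
  intro γ hγ
  obtain ⟨α, hα, rfl⟩ := fhat_applyB_supp (by rw [hpf]; exact hγ)
  rw [AffineSubspace.coe_map]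
  exact ⟨α, subset_affineSpan _ _ hα, rfl⟩

lemma map_le_span {f : BF k} {f' : BF k'} {p : MParam k k'} (hpf : applyB p f = f') :
    (affineSpan (ZMod 2) {α | fhat (toReal f) α ≠ 0}).map (tauAff p)
      ≤ affineSpan (ZMod 2) {γ | fhat (toReal f') γ ≠ 0} := by
  rw [AffineSubspace.map_span]
  apply affineSpan_le.2
  rintro γ ⟨α, hα, rfl⟩
  apply subset_affineSpan
  show fhat (toReal f') (tauAff p α) ≠ 0
  rw [tauAff_apply, ← hpf, fhat_applyB_at]
  exact mul_ne_zero hα (ee_ne_zero _)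

lemma tau_mem_affSupp {f : BF k} {f' : BF k'} {p : MParam k k'} (hpf : applyB p f = f')
    {x : Fin k → ZMod 2} (hx : x ∈ affSupp f) : tau p x ∈ affSupp f' := by
  have : tau p x ∈ (affineSpan (ZMod 2) {α | fhat (toReal f) α ≠ 0}).map (tauAff p) :=
    ⟨x, hx, rfl⟩
  exact map_le_span hpf this

lemma affSupp_sub {f : BF k} {f' : BF k'} {p : MParam k k'} (hpf : applyB p f = f') :
    affSupp f' ⊆ tau p '' (affSupp f) := by
  intro γ hγ
  have h1 : γ ∈ (affineSpan (ZMod 2) {α | fhat (toReal f) α ≠ 0}).map (tauAff p) :=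
    span_le_map hpf hγ
  obtain ⟨α, hα, rfl⟩ := h1
  exact ⟨α, hα, rfl⟩

lemma dimB_le {f : BF k} {f' : BF k'} {p : MParam k k'} (hpf : applyB p f = f') :
    dimB f' ≤ dimB f := by
  unfold dimB
  have h1 := AffineSubspace.direction_le (span_le_map hpf)
  rw [AffineSubspace.map_direction] at h1
  calc Module.finrank (ZMod 2) (affineSpan (ZMod 2) {γ | fhat (toReal f') γ ≠ 0}).direction
      ≤ Module.finrank (ZMod 2)
        (Submodule.map (tauAff p).linear
          (affineSpan (ZMod 2) {α | fhat (toReal f) α ≠ 0}).direction) :=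
        Submodule.finrank_mono h1
    _ ≤ _ := Submodule.finrank_map_le _ _

lemma dim_pos_of {f : BF k} {f' : BF k'} {p : MParam k k'} (hpf : applyB p f = f')
    (h : 0 < dimB f') : 1 ≤ dimB f :=
  le_trans h (dimB_le hpf)

end Aff

section Flow

variable {n : ℕ}

lemma conservation {G : BF n → BF n → ℝ} {w : BF n → BF n → BF n → ℝ}
    (hw : InfinityRelaxedFlow G w) {f : BF n} (hf : 1 ≤ dimB f) (g₀ : BF n) :
    ∑ h ∈ Finset.univ.filter (agrees f g₀), leak w f h = 0 := by
  have h2 := hw.2.2 g₀ f hf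
  simp only [leak]
  rw [Finset.sum_sub_distrib, h2, sub_self]

lemma leak_abs {G : BF n → BF n → ℝ} {w : BF n → BF n → BF n → ℝ}
    (hw : InfinityRelaxedFlow G w) (hGsymm : ∀ f₁ f₂, G f₁ f₂ = G f₂ f₁) (f g : BF n) :
    |leak w f g| ≤ ∑ f₂, G f f₂ := by
  have h1 : leak w f g = ∑ f₂, (w f₂ f g - w f f₂ g) := by
    simp only [leak, inflow, outflow]
    rw [Finset.sum_sub_distrib]
  rw [h1]
  calc |∑ f₂, (w f₂ f g - w f f₂ g)| ≤ ∑ f₂, |w f₂ f g - w f f₂ g| :=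
        Finset.abs_sum_le_sum_abs _ _
    _ ≤ ∑ f₂, G f f₂ := by
        apply Finset.sum_le_sum
        intro f₂ _
        have hn1 := hw.1 f₂ f g
        have hn2 := hw.1 f f₂ g
        have hc := hw.2.1 f₂ f g
        rw [abs_le]
        constructor
        · nlinarith [hGsymm f f₂]
        · nlinarith [hGsymm f f₂]

end Flow


section Vanish

variable {k k' : ℕ}

lemma good_vanish {G : BF k → BF k → ℝ} {w : BF k → BF k → BF k → ℝ}
    (hw : InfinityRelaxedFlow G w) {f : BF k} (hf : 1 ≤ dimB f) (p q : MParam k k')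
    (hgood : ∀ α, α ∉ affSupp f → ∀ β, tau p α ≠ tau q β) :
    ∑ g' : BF k', leak w f (sharpB p g') * leak w f (sharpB q g') = 0 := by
  classical
  let P : (Fin k' → ZMod 2) → Prop := fun z => ∃ α, α ∉ affSupp f ∧ tau p α = z
  let e := Equiv.piEquivPiSubtypeProd P (fun _ => Bool)
  have hnpS : ∀ {x : Fin k → ZMod 2}, x ∈ affSupp f → ¬ P (tau p x) := by
    intro x hx
    rintro ⟨α, hα, he2⟩
    have : α = x := tau_inj p he2
    exact hα (this ▸ hx)
  have hsum : ∑ g' : BF k', leak w f (sharpB p g') * leak w f (sharpB q g')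
      = ∑ uv : ((z : {z // P z}) → Bool) × ((z : {z // ¬ P z}) → Bool),
          leak w f (sharpB p (e.symm uv)) * leak w f (sharpB q (e.symm uv)) :=
    (Equiv.sum_comp e.symm
      (fun g' => leak w f (sharpB p g') * leak w f (sharpB q g'))).symm
  rw [hsum, Fintype.sum_prod_type, Finset.sum_comm]
  apply Finset.sum_eq_zero
  intro v _
  set u₀ : (z : {z // P z}) → Bool := fun _ => false with hu₀
  have hq : ∀ u : (z : {z // P z}) → Bool,
      sharpB q (e.symm (u, v)) = sharpB q (e.symm (u₀, v)) := by
    intro u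
    funext β
    rw [sharpB_eq, sharpB_eq]
    congr 1
    have hnp : ¬ P (tau q β) := by
      rintro ⟨α, hα, he2⟩
      exact hgood α hα β he2
    show e.symm (u, v) (tau q β) = e.symm (u₀, v) (tau q β)
    rw [show e.symm (u, v) (tau q β) = _ from
        Equiv.piEquivPiSubtypeProd_symm_apply P (fun _ => Bool) (u, v) (tau q β),
      show e.symm (u₀, v) (tau q β) = _ from
        Equiv.piEquivPiSubtypeProd_symm_apply P (fun _ => Bool) (u₀, v) (tau q β),
      dif_neg hnp, dif_neg hnp]
  set g₀ : BF k := sharpB p (e.symm (u₀, v)) with hg₀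
  have himg : ∀ (u : (z : {z // P z}) → Bool) (x : Fin k → ZMod 2), x ∈ affSupp f →
      sharpB p (e.symm (u, v)) x = g₀ x := by
    intro u x hx
    rw [hg₀, sharpB_eq, sharpB_eq]
    congr 1
    show e.symm (u, v) (tau p x) = e.symm (u₀, v) (tau p x)
    rw [show e.symm (u, v) (tau p x) = _ from
        Equiv.piEquivPiSubtypeProd_symm_apply P (fun _ => Bool) (u, v) (tau p x),
      show e.symm (u₀, v) (tau p x) = _ from
        Equiv.piEquivPiSubtypeProd_symm_apply P (fun _ => Bool) (u₀, v) (tau p x),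
      dif_neg (hnpS hx), dif_neg (hnpS hx)]
  have hu0 : ∑ u : (z : {z // P z}) → Bool, leak w f (sharpB p (e.symm (u, v))) = 0 := by
    rw [Finset.sum_nbij' (i := fun u : (z : {z // P z}) → Bool => sharpB p (e.symm (u, v)))
      (j := fun (h : BF k) (z : {z // P z}) =>
        xor (h (Classical.choose z.2))
          (decide (p.1.2.2.2 + dotProduct p.1.2.1 (Classical.choose z.2) = 1)))
      (t := Finset.univ.filter (agrees f g₀)) (g := fun h => leak w f h)
      ?hi ?hj ?hleft ?hright ?hfg]
    · exact conservation hw hf g₀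
    case hi =>
      intro u _
      rw [Finset.mem_filter]
      exact ⟨Finset.mem_univ _, fun x hx => himg u x hx⟩
    case hj =>
      intro h _
      exact Finset.mem_univ _
    case hleft =>
      intro u _
      funext z
      have hz2 := Classical.choose_spec z.2
      set αz := Classical.choose z.2 with hαz
      show xor (sharpB p (e.symm (u, v)) αz) _ = u z
      rw [sharpB_eq]
      have hval : e.symm (u, v) (tau p αz) = u z := by
        rw [show e.symm (u, v) (tau p αz) = _ from
          Equiv.piEquivPiSubtypeProd_symm_apply P (fun _ => Bool) (u, v) (tau p αz)]
        have hPz : P (tau p αz) := ⟨αz, hz2.1, rfl⟩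
        rw [dif_pos hPz]
        have hze : (⟨tau p αz, hPz⟩ : {z // P z}) = z := Subtype.ext hz2.2
        rw [hze]
      rw [hval]
      cases u z <;> cases (decide (p.1.2.2.2 + dotProduct p.1.2.1 αz = 1)) <;> rfl
    case hright =>
      intro h hh
      rw [Finset.mem_filter] at hh
      funext x
      by_cases hx : x ∈ affSupp f
      · rw [himg _ x hx]
        exact (hh.2 x hx).symm
      · have hPx : P (tau p x) := ⟨x, hx, rfl⟩
        rw [sharpB_eq]
        have hval : e.symm
            ((fun (z : {z // P z}) =>
              xor (h (Classical.choose z.2))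
                (decide (p.1.2.2.2 + dotProduct p.1.2.1 (Classical.choose z.2) = 1))), v)
            (tau p x)
            = xor (h x) (decide (p.1.2.2.2 + dotProduct p.1.2.1 x = 1)) := by
          rw [show e.symm (_, v) (tau p x) = _ from
            Equiv.piEquivPiSubtypeProd_symm_apply P (fun _ => Bool) (_, v) (tau p x),
            dif_pos hPx]
          dsimp only
          have hxx : Classical.choose hPx = x :=
            tau_inj p (Classical.choose_spec hPx).2
          rw [hxx]
        rw [hval]
        cases h x <;> cases (decide (p.1.2.2.2 + dotProduct p.1.2.1 x = 1)) <;> rfl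
    case hfg =>
      intro u _
      rfl
  calc ∑ u : (z : {z // P z}) → Bool,
        leak w f (sharpB p (e.symm (u, v))) * leak w f (sharpB q (e.symm (u, v)))
      = ∑ u : (z : {z // P z}) → Bool,
          leak w f (sharpB p (e.symm (u, v))) * leak w f (sharpB q (e.symm (u₀, v))) := by
        refine Finset.sum_congr rfl (fun u _ => ?_)
        rw [hq u]
    _ = (∑ u : (z : {z // P z}) → Bool, leak w f (sharpB p (e.symm (u, v))))
          * leak w f (sharpB q (e.symm (u₀, v))) := (Finset.sum_mul _ _ _).symm
    _ = 0 := by rw [hu0, zero_mul]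

end Vanish


section Fiber

variable {k k' : ℕ}

lemma exists_xi {n : ℕ} (W : Submodule (ZMod 2) (Fin n → ZMod 2)) (u : Fin n → ZMod 2)
    (hu : u ∉ W) :
    ∃ ξ : (Fin n → ZMod 2) →ₗ[ZMod 2] ZMod 2, (∀ x ∈ W, ξ x = 0) ∧ ξ u = 1 := by
  have hquot : W.mkQ u ≠ 0 := by
    rw [Submodule.mkQ_apply, Ne, Submodule.Quotient.mk_eq_zero]
    exact hu
  obtain ⟨C, hC⟩ := Submodule.exists_isCompl (Submodule.span (ZMod 2) {W.mkQ u})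
  set proj := (Submodule.span (ZMod 2) {W.mkQ u}).linearProjOfIsCompl C hC
  set iso := LinearEquiv.toSpanNonzeroSingleton (ZMod 2) _ (W.mkQ u) hquot
  refine ⟨(iso.symm.toLinearMap.comp proj).comp W.mkQ, ?_, ?_⟩
  · intro x hx
    have h0 : W.mkQ x = 0 := by
      rw [Submodule.mkQ_apply, Submodule.Quotient.mk_eq_zero]
      exact hx
    simp [h0]
  · have h1 : proj (W.mkQ u)
        = ⟨W.mkQ u, Submodule.mem_span_singleton_self _⟩ :=
      Submodule.linearProjOfIsCompl_apply_left hC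
        ⟨W.mkQ u, Submodule.mem_span_singleton_self _⟩
    have h2 : iso 1 = ⟨W.mkQ u, Submodule.mem_span_singleton_self _⟩ := by
      rw [LinearEquiv.toSpanNonzeroSingleton_one]
    simp only [LinearMap.comp_apply, LinearEquiv.coe_coe, h1]
    rw [← h2, LinearEquiv.symm_apply_apply]

lemma fiber_card_eq (f : BF k) (f' : BF k') {β : Fin k → ZMod 2} (hβ : β ∉ affSupp f)
    {y y' : Fin k' → ZMod 2} (hy : y ∉ affSupp f') (hy' : y' ∉ affSupp f') :
    (Finset.univ.filter (fun q : MParam k k' => applyB q f = f' ∧ tau q β = y)).card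
      = (Finset.univ.filter (fun q : MParam k k' => applyB q f = f' ∧ tau q β = y')).card := by
  by_cases hyy : y = y'
  · rw [hyy]
  obtain ⟨γ₀, hγ₀⟩ := exists_fhat_ne_zero f'
  have hv₀ : γ₀ ∈ affineSpan (ZMod 2) {γ | fhat (toReal f') γ ≠ 0} :=
    subset_affineSpan _ _ hγ₀
  set U := (affineSpan (ZMod 2) {γ | fhat (toReal f') γ ≠ 0}).direction with hU
  set sv := y + y' with hsv
  set uv := y + γ₀ with huv
  have hmemdir : ∀ z : Fin k' → ZMod 2, z ∈ affSupp f' → z + γ₀ ∈ U := by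
    intro z hz
    have hdir : z - γ₀ ∈ U := AffineSubspace.vsub_mem_direction hz hv₀
    have hze : z - γ₀ = z + γ₀ := by
      funext i
      simp only [Pi.sub_apply, Pi.add_apply]
      exact CharTwo.sub_eq_add _ _
    rwa [hze] at hdir
  have hadd : ∀ z : Fin k' → ZMod 2, z + γ₀ ∈ U → z ∈ affSupp f' := by
    intro z hz
    have := AffineSubspace.vadd_mem_of_mem_direction hz hv₀
    have hze : (z + γ₀) +ᵥ γ₀ = z := by
      show z + γ₀ + γ₀ = z
      rw [add_assoc, vec_add_self, add_zero]
    rwa [hze] at this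
  have huvW : uv ∉ U ⊔ Submodule.span (ZMod 2) {sv} := by
    intro hmem
    obtain ⟨a, ha, b, hb, hab⟩ := Submodule.mem_sup.1 hmem
    obtain ⟨c, rfl⟩ := Submodule.mem_span_singleton.1 hb
    rcases zmod2_cases c with hc | hc
    · subst hc
      rw [zero_smul, add_zero] at hab
      refine hy (hadd y ?_)
      rw [← huv, ← hab]
      exact ha
    · subst hc
      rw [one_smul] at hab
      apply hy'
      apply hadd y'
      have h2 : y' + γ₀ = a := by
        have h3 : uv + sv = a + sv + sv := by rw [hab]
        rw [show uv + sv = y' + γ₀ from by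
            rw [huv, hsv, show y + γ₀ + (y + y') = (y + y) + (γ₀ + y') from by abel,
              vec_add_self, zero_add, add_comm],
          add_assoc, vec_add_self, add_zero] at h3
        exact h3
      rw [h2]; exact ha
  obtain ⟨ξ, hξW, hξu⟩ := exists_xi _ uv huvW
  have hξU : ∀ x ∈ U, ξ x = 0 := fun x hx => hξW x (Submodule.mem_sup_left hx)
  have hξs : ξ sv = 0 :=
    hξW sv (Submodule.mem_sup_right (Submodule.mem_span_singleton_self _))
  have hξu' : ξ (y' + γ₀) = 1 := by
    rw [show y' + γ₀ = uv + sv from by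
      rw [huv, hsv, show y + γ₀ + (y + y') = (y + y) + (γ₀ + y') from by abel,
        vec_add_self, zero_add, add_comm]]
    rw [map_add, hξu, hξs, add_zero]
  set xiv : Fin k' → ZMod 2 := fun i => ξ (fun j => if i = j then 1 else 0) with hxiv
  have hxi : ∀ z, dotProduct z xiv = ξ z := by
    intro z
    rw [LinearMap.pi_apply_eq_sum_univ ξ z, dotProduct]
    exact Finset.sum_congr rfl (fun i _ => by rw [smul_eq_mul, hxiv])
  set B : Matrix (Fin k') (Fin k') (ZMod 2) := 1 + Matrix.vecMulVec xiv sv with hB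
  have hvB : ∀ z, Matrix.vecMul z B = z + (ξ z) • sv := by
    intro z
    rw [hB, Matrix.vecMul_add, Matrix.vecMul_one]
    congr 1
    funext j
    show dotProduct z (fun i => Matrix.vecMulVec xiv sv i j) = (ξ z • sv) j
    simp only [Matrix.vecMulVec_apply, dotProduct, Pi.smul_apply, smul_eq_mul]
    rw [← hxi z, dotProduct, Finset.sum_mul]
    exact Finset.sum_congr rfl (fun i _ => by ring)
  have hBB : ∀ z, Matrix.vecMul (Matrix.vecMul z B) B = z := by
    intro z
    rw [hvB, hvB, map_add, map_smul, hξs, smul_eq_mul, mul_zero, add_zero, add_assoc]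
    rw [show (ξ z) • sv + (ξ z) • sv = 0 from vec_add_self _, add_zero]
  have hBmat : B * B = 1 := by
    ext i j
    have h1 : Matrix.vecMul (Pi.single i (1:ZMod 2)) (B * B) = Pi.single i (1:ZMod 2) := by
      rw [← Matrix.vecMul_vecMul, hBB]
    have h2 := congrFun (Matrix.single_one_vecMul i (B * B)) j
    rw [h1] at h2
    rw [show (B * B) i j = (Pi.single i (1:ZMod 2) : Fin k' → ZMod 2) j from h2.symm]
    simp [Matrix.one_apply, Pi.single_apply, eq_comm]
  have hdet : IsUnit B.det := by
    have hd : B.det * B.det = 1 := by rw [← Matrix.det_mul, hBmat, Matrix.det_one]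
    exact IsUnit.of_mul_eq_one _ hd
  set Φ : MParam k k' → MParam k k' := fun q =>
    ⟨(q.1.1 * B, q.1.2.1, Matrix.vecMul q.1.2.2.1 B + (ξ γ₀) • sv, q.1.2.2.2), by
      rw [Matrix.rank_mul_eq_left_of_isUnit_det B q.1.1 hdet]; exact q.2⟩ with hΦ
  have htauΦ : ∀ q α, tau (Φ q) α = tau q α + (ξ (tau q α) + ξ γ₀) • sv := by
    intro q α
    show Matrix.vecMul α (q.1.1 * B) + (Matrix.vecMul q.1.2.2.1 B + (ξ γ₀) • sv)
        = tau q α + (ξ (tau q α) + ξ γ₀) • sv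
    rw [← Matrix.vecMul_vecMul, hvB, hvB]
    simp only [tau, map_add, add_smul]
    abel
  have hfix : ∀ z, z ∈ affSupp f' → ξ z + ξ γ₀ = 0 := by
    intro z hz
    have h0 : ξ (z + γ₀) = 0 := hξU _ (hmemdir z hz)
    rwa [map_add] at h0
  have hΦmem : ∀ q : MParam k k', applyB q f = f' → applyB (Φ q) f = f' := by
    intro q hq
    have heq : applyB (Φ q) f = applyB q f := by
      apply eq_of_fhat_eq
      intro γ
      rw [fhat_applyB, fhat_applyB]
      refine Finset.sum_congr rfl (fun α _ => ?_)
      by_cases hα : fhat (toReal f) α = 0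
      · rw [hα]; simp
      · have htau : tau (Φ q) α = tau q α := by
          rw [htauΦ]
          have hmem : tau q α ∈ affSupp f' :=
            tau_mem_affSupp hq (subset_affineSpan _ _ hα)
          rw [hfix _ hmem, zero_smul, add_zero]
        have hb : (Φ q).1.2.1 = q.1.2.1 := rfl
        have hc : (Φ q).1.2.2.2 = q.1.2.2.2 := rfl
        rw [htau, hb, hc]
    rw [heq, hq]
  have hΦinv : ∀ q, Φ (Φ q) = q := by
    intro q
    apply Subtype.ext
    have hβc : Matrix.vecMul (Matrix.vecMul q.1.2.2.1 B + ξ γ₀ • sv) B + ξ γ₀ • sv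
        = q.1.2.2.1 := by
      rw [Matrix.add_vecMul, hBB]
      rcases zmod2_cases (ξ γ₀) with hc | hc
      · rw [hc, zero_smul, Matrix.zero_vecMul, add_zero, add_zero]
      · rw [hc, one_smul, hvB, hξs, zero_smul, add_zero, add_assoc, vec_add_self, add_zero]
    show (q.1.1 * B * B, q.1.2.1,
        Matrix.vecMul (Matrix.vecMul q.1.2.2.1 B + ξ γ₀ • sv) B + ξ γ₀ • sv, q.1.2.2.2) = q.1
    rw [Matrix.mul_assoc, hBmat, Matrix.mul_one, hβc]
  have hΦy : ∀ q : MParam k k', tau q β = y → tau (Φ q) β = y' := by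
    intro q hty
    rw [htauΦ, hty]
    rw [show ξ y + ξ γ₀ = (1:ZMod 2) from by rw [← map_add]; exact hξu, one_smul, hsv,
      ← add_assoc, vec_add_self, zero_add]
  have hΦy' : ∀ q : MParam k k', tau q β = y' → tau (Φ q) β = y := by
    intro q hty
    rw [htauΦ, hty]
    rw [show ξ y' + ξ γ₀ = (1:ZMod 2) from by rw [← map_add]; exact hξu', one_smul, hsv,
      show y' + (y + y') = (y' + y') + y from by abel, vec_add_self, zero_add]
  apply Finset.card_nbij' Φ Φ
  · intro q hq
    rw [Finset.mem_coe, Finset.mem_filter] at hq ⊢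
    exact ⟨Finset.mem_univ _, hΦmem q hq.2.1, hΦy q hq.2.2⟩
  · intro q hq
    rw [Finset.mem_coe, Finset.mem_filter] at hq ⊢
    exact ⟨Finset.mem_univ _, hΦmem q hq.2.1, hΦy' q hq.2.2⟩
  · intro q _; exact hΦinv q
  · intro q _; exact hΦinv q

end Fiber


section Count

variable {k k' : ℕ}

lemma tau_notin_affSupp {f : BF k} {f' : BF k'} {p : MParam k k'} (hp : applyB p f = f')
    {α : Fin k → ZMod 2} (hα : α ∉ affSupp f) : tau p α ∉ affSupp f' := by
  intro hmem
  obtain ⟨α₁, hα₁, he⟩ := affSupp_sub hp hmem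
  exact hα (tau_inj p he ▸ hα₁)

lemma fiber_bound (f : BF k) (f' : BF k') {β : Fin k → ZMod 2} (hβ : β ∉ affSupp f)
    {y : Fin k' → ZMod 2} (hy : y ∉ affSupp f') :
    (Finset.univ.filter (fun q : MParam k k' => applyB q f = f' ∧ tau q β = y)).card
        * (2 ^ k' - 2 ^ k)
      ≤ (Finset.univ.filter (fun q : MParam k k' => applyB q f = f')).card := by
  classical
  set N := Finset.univ.filter (fun q : MParam k k' => applyB q f = f') with hN
  by_cases hNe : N.Nonempty
  swap
  · have h0 : (Finset.univ.filter
        (fun q : MParam k k' => applyB q f = f' ∧ tau q β = y)).card = 0 := by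
      rw [Finset.card_eq_zero]
      rw [Finset.not_nonempty_iff_eq_empty] at hNe
      apply Finset.eq_empty_of_forall_notMem
      intro q hq
      rw [Finset.mem_filter] at hq
      have : q ∈ N := by rw [hN, Finset.mem_filter]; exact ⟨hq.1, hq.2.1⟩
      rw [hNe] at this
      exact absurd this (Finset.notMem_empty q)
    rw [h0, zero_mul]
    exact Nat.zero_le _
  obtain ⟨p₀, hp₀⟩ := hNe
  rw [hN, Finset.mem_filter] at hp₀
  set T' := Finset.univ.filter (fun z : Fin k' → ZMod 2 => z ∈ affSupp f') with hT'
  set C := Finset.univ.filter (fun z : Fin k' → ZMod 2 => z ∉ affSupp f') with hC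
  have hT'card : T'.card ≤ 2 ^ k := by
    have hsub : T' ⊆ Finset.image (tau p₀) Finset.univ := by
      intro z hz
      rw [hT', Finset.mem_filter] at hz
      obtain ⟨α, _, rfl⟩ := affSupp_sub hp₀.2 hz.2
      exact Finset.mem_image_of_mem _ (Finset.mem_univ α)
    calc T'.card ≤ (Finset.image (tau p₀) Finset.univ).card := Finset.card_le_card hsub
      _ ≤ (Finset.univ : Finset (Fin k → ZMod 2)).card := Finset.card_image_le
      _ = 2 ^ k := by rw [Finset.card_univ, card_vec]
  have hCcard : 2 ^ k' - 2 ^ k ≤ C.card := by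
    have hpart2 : T'.card + C.card = 2 ^ k' := by
      rw [hT', hC]
      have hp3 := Finset.card_filter_add_card_filter_not
        (s := (Finset.univ : Finset (Fin k' → ZMod 2)))
        (fun z : Fin k' → ZMod 2 => z ∈ affSupp f')
      rw [Finset.card_univ, card_vec] at hp3
      exact hp3
    omega
  have hconst : ∀ y' ∈ C, (Finset.univ.filter
      (fun q : MParam k k' => applyB q f = f' ∧ tau q β = y')).card
      = (Finset.univ.filter
        (fun q : MParam k k' => applyB q f = f' ∧ tau q β = y)).card := by
    intro y' hy'
    rw [hC, Finset.mem_filter] at hy'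
    exact fiber_card_eq f f' hβ hy'.2 hy
  have hsum : ∑ y' ∈ C, (Finset.univ.filter
      (fun q : MParam k k' => applyB q f = f' ∧ tau q β = y')).card ≤ N.card := by
    have heq : ∀ y' : Fin k' → ZMod 2, Finset.univ.filter
        (fun q : MParam k k' => applyB q f = f' ∧ tau q β = y')
        = N.filter (fun q => tau q β = y') := by
      intro y'
      rw [hN, Finset.filter_filter]
    calc ∑ y' ∈ C, (Finset.univ.filter
          (fun q : MParam k k' => applyB q f = f' ∧ tau q β = y')).card
        = ∑ y' ∈ C, ∑ q ∈ N, (if tau q β = y' then 1 else 0) := by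
          refine Finset.sum_congr rfl (fun y' _ => ?_)
          rw [heq y', Finset.card_filter]
      _ = ∑ q ∈ N, ∑ y' ∈ C, (if tau q β = y' then 1 else 0) := Finset.sum_comm
      _ ≤ ∑ q ∈ N, 1 := by
          refine Finset.sum_le_sum (fun q _ => ?_)
          have : ∑ y' ∈ C, (if tau q β = y' then 1 else 0)
              = ∑ y' ∈ C, (if y' = tau q β then 1 else 0) := by
            refine Finset.sum_congr rfl (fun y' _ => ?_)
            by_cases h : tau q β = y'
            · rw [if_pos h, if_pos h.symm]
            · rw [if_neg h, if_neg (fun hh => h hh.symm)]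
          rw [this, Finset.sum_ite_eq' C (tau q β) (fun _ => 1)]
          split <;> omega
      _ = N.card := by rw [Finset.sum_const, smul_eq_mul, mul_one]
  calc (Finset.univ.filter
        (fun q : MParam k k' => applyB q f = f' ∧ tau q β = y)).card * (2 ^ k' - 2 ^ k)
      ≤ (Finset.univ.filter
        (fun q : MParam k k' => applyB q f = f' ∧ tau q β = y)).card * C.card :=
        Nat.mul_le_mul_left _ hCcard
    _ = ∑ y' ∈ C, (Finset.univ.filter
          (fun q : MParam k k' => applyB q f = f' ∧ tau q β = y')).card := by
        rw [Finset.sum_congr rfl hconst, Finset.sum_const, smul_eq_mul, mul_comm]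
    _ ≤ N.card := hsum

lemma bad_count (f : BF k) (f' : BF k') :
    ((Finset.univ.filter (fun p : MParam k k' => applyB p f = f')
        ×ˢ Finset.univ.filter (fun p : MParam k k' => applyB p f = f')).filter
      (fun pq : MParam k k' × MParam k k' =>
        ∃ α, α ∉ affSupp f ∧ ∃ β, tau pq.1 α = tau pq.2 β)).card * (2 ^ k' - 2 ^ k)
    ≤ 2 ^ k * 2 ^ k *
        ((Finset.univ.filter (fun p : MParam k k' => applyB p f = f')).card
          * (Finset.univ.filter (fun p : MParam k k' => applyB p f = f')).card) := by
  classical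
  set N := Finset.univ.filter (fun p : MParam k k' => applyB p f = f') with hN
  set Sc := Finset.univ.filter (fun α : Fin k → ZMod 2 => α ∉ affSupp f) with hSc
  set Bad := (N ×ˢ N).filter (fun pq : MParam k k' × MParam k k' =>
    ∃ α, α ∉ affSupp f ∧ ∃ β, tau pq.1 α = tau pq.2 β) with hBad
  have hsub : Bad ⊆ (Sc ×ˢ (Finset.univ : Finset (Fin k → ZMod 2))).biUnion
      (fun ab => (N ×ˢ N).filter
        (fun pq : MParam k k' × MParam k k' => tau pq.1 ab.1 = tau pq.2 ab.2)) := by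
    intro pq hpq
    rw [hBad, Finset.mem_filter] at hpq
    obtain ⟨hmem, α, hα, β, he⟩ := hpq
    rw [Finset.mem_biUnion]
    refine ⟨(α, β), ?_, ?_⟩
    · rw [Finset.mem_product]
      exact ⟨by rw [hSc, Finset.mem_filter]; exact ⟨Finset.mem_univ _, hα⟩, Finset.mem_univ _⟩
    · rw [Finset.mem_filter]
      exact ⟨hmem, he⟩
  have hpair : ∀ α, α ∉ affSupp f → ∀ β : Fin k → ZMod 2,
      ((N ×ˢ N).filter
        (fun pq : MParam k k' × MParam k k' => tau pq.1 α = tau pq.2 β)).card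
        * (2 ^ k' - 2 ^ k) ≤ N.card * N.card := by
    intro α hα β
    have hcardeq : ((N ×ˢ N).filter
        (fun pq : MParam k k' × MParam k k' => tau pq.1 α = tau pq.2 β)).card
        = ∑ p ∈ N, (N.filter (fun q => tau p α = tau q β)).card := by
      rw [Finset.card_filter, Finset.sum_product]
      refine Finset.sum_congr rfl (fun p _ => ?_)
      rw [Finset.card_filter]
    rw [hcardeq, Finset.sum_mul]
    by_cases hβ : β ∈ affSupp f
    · -- all fibers empty
      have hz : ∀ p ∈ N, (N.filter (fun q => tau p α = tau q β)).card * (2 ^ k' - 2 ^ k) = 0 := by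
        intro p hp
        rw [hN, Finset.mem_filter] at hp
        have : N.filter (fun q => tau p α = tau q β) = ∅ := by
          apply Finset.eq_empty_of_forall_notMem
          intro q hq
          rw [Finset.mem_filter] at hq
          obtain ⟨hqN, hqe⟩ := hq
          rw [hN, Finset.mem_filter] at hqN
          have h1 : tau q β ∈ affSupp f' := tau_mem_affSupp hqN.2 hβ
          have h2 : tau p α ∉ affSupp f' := tau_notin_affSupp hp.2 hα
          exact h2 (hqe ▸ h1)
        rw [this, Finset.card_empty, zero_mul]
      calc ∑ p ∈ N, (N.filter (fun q => tau p α = tau q β)).card * (2 ^ k' - 2 ^ k)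
          = ∑ p ∈ N, 0 := Finset.sum_congr rfl hz
        _ = 0 := Finset.sum_const_zero
        _ ≤ N.card * N.card := Nat.zero_le _
    · -- use fiber_bound
      have hb : ∀ p ∈ N, (N.filter (fun q => tau p α = tau q β)).card * (2 ^ k' - 2 ^ k)
          ≤ N.card := by
        intro p hp
        rw [hN, Finset.mem_filter] at hp
        have hyn : tau p α ∉ affSupp f' := tau_notin_affSupp hp.2 hα
        have heq2 : N.filter (fun q => tau p α = tau q β)
            = Finset.univ.filter
              (fun q : MParam k k' => applyB q f = f' ∧ tau q β = tau p α) := by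
          rw [hN, Finset.filter_filter]
          apply Finset.filter_congr
          intro q _
          constructor
          · rintro ⟨h1, h2⟩; exact ⟨h1, h2.symm⟩
          · rintro ⟨h1, h2⟩; exact ⟨h1, h2.symm⟩
        rw [heq2]
        exact fiber_bound f f' hβ hyn
      calc ∑ p ∈ N, (N.filter (fun q => tau p α = tau q β)).card * (2 ^ k' - 2 ^ k)
          ≤ ∑ p ∈ N, N.card := Finset.sum_le_sum hb
        _ = N.card * N.card := by rw [Finset.sum_const, smul_eq_mul]
  calc Bad.card * (2 ^ k' - 2 ^ k)
      ≤ (∑ ab ∈ Sc ×ˢ (Finset.univ : Finset (Fin k → ZMod 2)),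
          ((N ×ˢ N).filter (fun pq : MParam k k' × MParam k k' =>
            tau pq.1 ab.1 = tau pq.2 ab.2)).card) * (2 ^ k' - 2 ^ k) := by
        apply Nat.mul_le_mul_right
        exact le_trans (Finset.card_le_card hsub) (Finset.card_biUnion_le)
    _ = ∑ ab ∈ Sc ×ˢ (Finset.univ : Finset (Fin k → ZMod 2)),
          ((N ×ˢ N).filter (fun pq : MParam k k' × MParam k k' =>
            tau pq.1 ab.1 = tau pq.2 ab.2)).card * (2 ^ k' - 2 ^ k) := by
        rw [Finset.sum_mul]
    _ ≤ ∑ _ab ∈ Sc ×ˢ (Finset.univ : Finset (Fin k → ZMod 2)), N.card * N.card := by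
        refine Finset.sum_le_sum (fun ab hab => ?_)
        rw [Finset.mem_product] at hab
        have hα : ab.1 ∉ affSupp f := by
          have := hab.1
          rw [hSc, Finset.mem_filter] at this
          exact this.2
        exact hpair ab.1 hα ab.2
    _ ≤ 2 ^ k * 2 ^ k * (N.card * N.card) := by
        rw [Finset.sum_const, smul_eq_mul]
        apply Nat.mul_le_mul_right
        rw [Finset.card_product, Finset.card_univ, card_vec]
        have : Sc.card ≤ 2 ^ k := by
          calc Sc.card ≤ (Finset.univ : Finset (Fin k → ZMod 2)).card :=
                Finset.card_le_card (Finset.filter_subset _ _)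
            _ = 2 ^ k := by rw [Finset.card_univ, card_vec]
        exact Nat.mul_le_mul_right _ this

lemma sum_card_N (f : BF k) :
    ∑ f' : BF k', (Finset.univ.filter (fun p : MParam k k' => applyB p f = f')).card
      = Fintype.card (MParam k k') := by
  classical
  have h1 : ∀ f' : BF k',
      (Finset.univ.filter (fun p : MParam k k' => applyB p f = f')).card
      = ∑ p : MParam k k', (if applyB p f = f' then 1 else 0) :=
    fun f' => Finset.card_filter _ _
  rw [Finset.sum_congr rfl (fun f' _ => h1 f'), Finset.sum_comm]
  rw [← Finset.card_univ]
  rw [Finset.sum_congr rfl (fun p (_ : p ∈ Finset.univ) => ?_), Finset.sum_const, smul_eq_mul, mul_one]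
  have : ∑ f' : BF k', (if applyB p f = f' then 1 else 0)
      = ∑ f' : BF k', (if f' = applyB p f then 1 else 0) := by
    refine Finset.sum_congr rfl (fun f' _ => ?_)
    by_cases h : applyB p f = f'
    · rw [if_pos h, if_pos h.symm]
    · rw [if_neg h, if_neg (fun hh => h hh.symm)]
  rw [this, Finset.sum_ite_eq' Finset.univ (applyB p f) (fun _ => 1), if_pos (Finset.mem_univ _)]

end Count


section SqBound

variable {k k' : ℕ}

lemma card_BF (n : ℕ) : Fintype.card (BF n) = 2 ^ 2 ^ n := by
  rw [show Fintype.card (BF n) = Fintype.card Bool ^ Fintype.card (Fin n → ZMod 2) from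
    Fintype.card_fun]
  rw [card_vec, Fintype.card_bool]

lemma sum_sq_bound {G : BF k → BF k → ℝ} {w : BF k → BF k → BF k → ℝ}
    (hw : InfinityRelaxedFlow G w) (hGsymm : ∀ f₁ f₂, G f₁ f₂ = G f₂ f₁)
    (f : BF k) (hf : 1 ≤ dimB f) (f' : BF k') :
    ∑ g' : BF k',
      (∑ p ∈ Finset.univ.filter (fun p : MParam k k' => applyB p f = f'),
        leak w f (sharpB p g'))^2
    ≤ (((Finset.univ.filter (fun p : MParam k k' => applyB p f = f')
          ×ˢ Finset.univ.filter (fun p : MParam k k' => applyB p f = f')).filter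
        (fun pq : MParam k k' × MParam k k' =>
          ∃ α, α ∉ affSupp f ∧ ∃ β, tau pq.1 α = tau pq.2 β)).card : ℝ)
      * ((2:ℝ) ^ 2 ^ k' * (∑ f₂, G f f₂)^2) := by
  classical
  set N := Finset.univ.filter (fun p : MParam k k' => applyB p f = f') with hN
  set cap := ∑ f₂, G f f₂ with hcap
  have hcap0 : 0 ≤ cap := le_trans (abs_nonneg (leak w f f)) (leak_abs hw hGsymm f f)
  have habs : ∀ (g₁ : BF k') (p q : MParam k k'),
      leak w f (sharpB p g₁) * leak w f (sharpB q g₁) ≤ cap^2 := by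
    intro g₁ p q
    have h1 := leak_abs hw hGsymm f (sharpB p g₁)
    have h2 := leak_abs hw hGsymm f (sharpB q g₁)
    calc leak w f (sharpB p g₁) * leak w f (sharpB q g₁)
        ≤ |leak w f (sharpB p g₁) * leak w f (sharpB q g₁)| := le_abs_self _
      _ = |leak w f (sharpB p g₁)| * |leak w f (sharpB q g₁)| := abs_mul _ _
      _ ≤ cap * cap := mul_le_mul h1 h2 (abs_nonneg _) hcap0
      _ = cap^2 := (sq cap).symm
  have hsplit : ∀ g' : BF k',
      (∑ p ∈ N, leak w f (sharpB p g'))^2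
        = ∑ pq ∈ N ×ˢ N, leak w f (sharpB pq.1 g') * leak w f (sharpB pq.2 g') := by
    intro g'
    rw [sq, Finset.sum_mul_sum]
    rw [Finset.sum_product (f := fun pq : MParam k k' × MParam k k' =>
      leak w f (sharpB pq.1 g') * leak w f (sharpB pq.2 g'))]
  calc ∑ g' : BF k', (∑ p ∈ N, leak w f (sharpB p g'))^2
      = ∑ g' : BF k', ∑ pq ∈ N ×ˢ N,
          leak w f (sharpB pq.1 g') * leak w f (sharpB pq.2 g') :=
        Finset.sum_congr rfl (fun g' _ => hsplit g')
    _ = ∑ pq ∈ N ×ˢ N, ∑ g' : BF k',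
          leak w f (sharpB pq.1 g') * leak w f (sharpB pq.2 g') := Finset.sum_comm
    _ = (∑ pq ∈ (N ×ˢ N).filter (fun pq : MParam k k' × MParam k k' =>
            ∃ α, α ∉ affSupp f ∧ ∃ β, tau pq.1 α = tau pq.2 β),
          ∑ g' : BF k', leak w f (sharpB pq.1 g') * leak w f (sharpB pq.2 g'))
        + ∑ pq ∈ (N ×ˢ N).filter (fun pq : MParam k k' × MParam k k' =>
            ¬ ∃ α, α ∉ affSupp f ∧ ∃ β, tau pq.1 α = tau pq.2 β),
          ∑ g' : BF k', leak w f (sharpB pq.1 g') * leak w f (sharpB pq.2 g') :=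
        (Finset.sum_filter_add_sum_filter_not _ _ _).symm
    _ = ∑ pq ∈ (N ×ˢ N).filter (fun pq : MParam k k' × MParam k k' =>
            ∃ α, α ∉ affSupp f ∧ ∃ β, tau pq.1 α = tau pq.2 β),
          ∑ g' : BF k', leak w f (sharpB pq.1 g') * leak w f (sharpB pq.2 g') := by
        rw [Finset.sum_eq_zero (s := (N ×ˢ N).filter (fun pq : MParam k k' × MParam k k' =>
            ¬ ∃ α, α ∉ affSupp f ∧ ∃ β, tau pq.1 α = tau pq.2 β)) ?_, add_zero]
        intro pq hpq
        rw [Finset.mem_filter] at hpq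
        have hgood : ∀ α, α ∉ affSupp f → ∀ β, tau pq.1 α ≠ tau pq.2 β := by
          have := hpq.2
          push_neg at this
          exact this
        exact good_vanish hw hf pq.1 pq.2 hgood
    _ ≤ ∑ _pq ∈ (N ×ˢ N).filter (fun pq : MParam k k' × MParam k k' =>
            ∃ α, α ∉ affSupp f ∧ ∃ β, tau pq.1 α = tau pq.2 β),
          ((2:ℝ) ^ 2 ^ k' * cap^2) := by
        refine Finset.sum_le_sum (fun pq _ => ?_)
        calc ∑ g' : BF k', leak w f (sharpB pq.1 g') * leak w f (sharpB pq.2 g')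
            ≤ ∑ _g' : BF k', cap^2 := Finset.sum_le_sum (fun g' _ => habs g' pq.1 pq.2)
          _ = (Fintype.card (BF k') : ℝ) * cap^2 := by
              rw [Finset.sum_const, nsmul_eq_mul, Finset.card_univ]
          _ = (2:ℝ) ^ 2 ^ k' * cap^2 := by rw [card_BF]; push_cast; ring
    _ = (((N ×ˢ N).filter (fun pq : MParam k k' × MParam k k' =>
            ∃ α, α ∉ affSupp f ∧ ∃ β, tau pq.1 α = tau pq.2 β)).card : ℝ)
          * ((2:ℝ) ^ 2 ^ k' * cap^2) := by
        rw [Finset.sum_const, nsmul_eq_mul]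

end SqBound


section Avg

variable {k k' : ℕ}

lemma avg_abs_bound {G : BF k → BF k → ℝ} {w : BF k → BF k → BF k → ℝ}
    (hw : InfinityRelaxedFlow G w) (hGsymm : ∀ f₁ f₂, G f₁ f₂ = G f₂ f₁)
    (f : BF k) (f' : BF k') (hd : 0 < dimB f') (hkk : k < k') :
    ∑ g' : BF k',
      |∑ p ∈ Finset.univ.filter (fun p : MParam k k' => applyB p f = f'),
        leak w f (sharpB p g')|
      ≤ (Fintype.card (BF k') : ℝ) *
          ((∑ f₂, G f f₂) *
            ((2:ℝ)^k * ((Finset.univ.filter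
              (fun p : MParam k k' => applyB p f = f')).card : ℝ))
            / Real.sqrt ((2:ℝ)^k' - 2^k)) := by
  classical
  set N := Finset.univ.filter (fun p : MParam k k' => applyB p f = f') with hN
  set cap := ∑ f₂, G f f₂ with hcap
  have hcap0 : 0 ≤ cap := le_trans (abs_nonneg (leak w f f)) (leak_abs hw hGsymm f f)
  set D : ℝ := (2:ℝ)^k' - 2^k with hD'
  have hD : 0 < D := by
    rw [hD']
    have : (2:ℝ)^k < 2^k' := by
      apply pow_lt_pow_right₀ one_lt_two hkk
    linarith
  have hsD : 0 < Real.sqrt D := Real.sqrt_pos.2 hD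
  set cB := (Fintype.card (BF k') : ℝ) with hcB'
  have hcB : cB = (2:ℝ) ^ 2 ^ k' := by rw [hcB', card_BF]; push_cast; ring
  have hcB0 : 0 < cB := by rw [hcB]; positivity
  by_cases hNe : N.Nonempty
  swap
  · rw [Finset.not_nonempty_iff_eq_empty] at hNe
    have h0 : ∀ g' : BF k',
        |∑ p ∈ N, leak w f (sharpB p g')| = 0 := by
      intro g'
      rw [hNe, Finset.sum_empty, abs_zero]
    rw [Finset.sum_congr rfl (fun g' _ => h0 g'), Finset.sum_const_zero]
    have : (0:ℝ) ≤ cB * (cap * ((2:ℝ)^k * (N.card : ℝ)) / Real.sqrt D) := by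
      apply mul_nonneg hcB0.le
      apply div_nonneg _ hsD.le
      apply mul_nonneg hcap0
      positivity
    exact this
  obtain ⟨p₀, hp₀mem⟩ := hNe
  have hp₀ : applyB p₀ f = f' := by
    rw [hN, Finset.mem_filter] at hp₀mem
    exact hp₀mem.2
  have hf : 1 ≤ dimB f := dim_pos_of hp₀ hd
  set X : BF k' → ℝ := fun g' => ∑ p ∈ N, leak w f (sharpB p g') with hX
  set Bad := (N ×ˢ N).filter (fun pq : MParam k k' × MParam k k' =>
    ∃ α, α ∉ affSupp f ∧ ∃ β, tau pq.1 α = tau pq.2 β) with hBad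
  -- Cauchy-Schwarz
  have hcs : (∑ g' : BF k', |X g'|)^2 ≤ (∑ g' : BF k', (X g')^2) * cB := by
    have h1 := Finset.sum_mul_sq_le_sq_mul_sq Finset.univ (fun g' : BF k' => |X g'|)
      (fun _ => (1:ℝ))
    simp only [mul_one, one_pow, sq_abs] at h1
    rw [Finset.sum_const, nsmul_eq_mul, mul_one, Finset.card_univ] at h1
    exact h1
  -- second moment
  have hsm : ∑ g' : BF k', (X g')^2 ≤ (Bad.card : ℝ) * (cB * cap^2) := by
    have := sum_sq_bound hw hGsymm f hf f'
    rw [← hN, ← hBad, ← hcap] at this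
    rw [← hcB] at this
    exact this
  -- counting
  have hcount : (Bad.card : ℝ) * D ≤ (2:ℝ)^k * 2^k * ((N.card : ℝ) * (N.card : ℝ)) := by
    have hnat := bad_count (k := k) (k' := k') f f'
    rw [← hN] at hnat
    have h2k : (2:ℕ)^k ≤ 2^k' := Nat.pow_le_pow_right (by norm_num) hkk.le
    have hcast : (((2:ℕ) ^ k' - 2 ^ k : ℕ) : ℝ) = D := by
      rw [Nat.cast_sub h2k, hD']
      push_cast
      ring
    calc (Bad.card : ℝ) * D = ((Bad.card * (2 ^ k' - 2 ^ k) : ℕ) : ℝ) := by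
          rw [Nat.cast_mul, hcast]
      _ ≤ ((2 ^ k * 2 ^ k * (N.card * N.card) : ℕ) : ℝ) := Nat.cast_le.2 hnat
      _ = (2:ℝ)^k * 2^k * ((N.card : ℝ) * (N.card : ℝ)) := by push_cast; ring
  set T := cB * (cap * ((2:ℝ)^k * (N.card : ℝ)) / Real.sqrt D) with hT
  have hT0 : 0 ≤ T := by
    apply mul_nonneg hcB0.le
    apply div_nonneg _ hsD.le
    apply mul_nonneg hcap0
    positivity
  have hT2 : T^2 = (cB^2 * cap^2) * ((2:ℝ)^k * 2^k * ((N.card : ℝ) * (N.card : ℝ))) / D := by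
    rw [hT, mul_pow, div_pow, mul_pow, mul_pow, Real.sq_sqrt hD.le]
    ring
  have hsq : (∑ g' : BF k', |X g'|)^2 ≤ T^2 := by
    have hBD : (Bad.card : ℝ) ≤ (2:ℝ)^k * 2^k * ((N.card : ℝ) * (N.card : ℝ)) / D := by
      rw [le_div_iff₀ hD]
      exact hcount
    calc (∑ g' : BF k', |X g'|)^2 ≤ (∑ g' : BF k', (X g')^2) * cB := hcs
      _ ≤ ((Bad.card : ℝ) * (cB * cap^2)) * cB := by
          apply mul_le_mul_of_nonneg_right hsm hcB0.le
      _ = (Bad.card : ℝ) * (cB^2 * cap^2) := by ring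
      _ ≤ ((2:ℝ)^k * 2^k * ((N.card : ℝ) * (N.card : ℝ)) / D) * (cB^2 * cap^2) := by
          apply mul_le_mul_of_nonneg_right hBD
          positivity
      _ = T^2 := by rw [hT2]; ring
  have habs0 : 0 ≤ ∑ g' : BF k', |X g'| := Finset.sum_nonneg (fun g' _ => abs_nonneg _)
  have := Real.sqrt_le_sqrt hsq
  rw [Real.sqrt_sq habs0, Real.sqrt_sq hT0] at this
  exact this

lemma leakLift_le (w : BF k → BF k → BF k → ℝ) (f' g' : BF k') :
    |leakLift k k' w f' g'| ≤ (Fintype.card (MParam k k') : ℝ)⁻¹ *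
      ∑ f : BF k,
        |∑ p ∈ Finset.univ.filter (fun p : MParam k k' => applyB p f = f'),
          leak w f (sharpB p g')| := by
  classical
  rw [leakLift, finsum_eq_sum_of_fintype, Nat.card_eq_fintype_card]
  rw [abs_mul, abs_inv, Nat.abs_cast]
  apply mul_le_mul_of_nonneg_left _ (inv_nonneg.2 (Nat.cast_nonneg _))
  have hswap : ∑ p : MParam k k',
      ∑ f ∈ Finset.univ.filter (fun f : BF k => applyB p f = f'), leak w f (sharpB p g')
      = ∑ f : BF k,
        ∑ p ∈ Finset.univ.filter (fun p : MParam k k' => applyB p f = f'),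
          leak w f (sharpB p g') := by
    rw [Finset.sum_congr rfl (fun p (_ : p ∈ Finset.univ) => Finset.sum_filter _ _),
      Finset.sum_comm]
    exact Finset.sum_congr rfl (fun f _ => (Finset.sum_filter _ _).symm)
  rw [hswap]
  exact Finset.abs_sum_le_sum_abs _ _

end Avg


end TLB

/-- The total lifted leakage of an infinity relaxed flow of a gadget with total capacity `1`
satisfies `L_{k'} ≤ 2^{2^k + k}/√(2^{k'} − 2^k)`; in particular `L_{k'} → 0` as
`k' → ∞`. -/
theorem total_leakage_bound {k : ℕ} (hk : 2 ≤ k) (G : BF k → BF k → ℝ)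
    (hGsymm : ∀ f₁ f₂, G f₁ f₂ = G f₂ f₁) (hG0 : ∀ f₁ f₂, 0 ≤ G f₁ f₂)
    (hGneg : ∀ f, G f (fun x => !(f x)) = 0)
    (hGtot : (1 / 2 : ℝ) * ∑ f₁, ∑ f₂, G f₁ f₂ = 1)
    (w : BF k → BF k → BF k → ℝ) (hw : InfinityRelaxedFlow G w) :
    (∀ k' : ℕ, k < k' →
      Ltot k k' w ≤ (2 : ℝ) ^ (2 ^ k + k) / Real.sqrt ((2 ^ k' : ℝ) - 2 ^ k)) ∧
    Filter.Tendsto (fun k' => Ltot k k' w) Filter.atTop (nhds 0) := by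
  classical
  have hcapsum : ∑ f : BF k, ∑ f₂, G f f₂ = 2 := by linarith
  have hmain : ∀ k' : ℕ, k < k' →
      Ltot k k' w ≤ (2 : ℝ) ^ (2 ^ k + k) / Real.sqrt ((2 ^ k' : ℝ) - 2 ^ k) := by
    intro k' hkk
    have hD : (0:ℝ) < (2:ℝ)^k' - 2^k := by
      have : (2:ℝ)^k < 2^k' := pow_lt_pow_right₀ one_lt_two hkk
      linarith
    have hsD : 0 < Real.sqrt ((2:ℝ)^k' - 2^k) := Real.sqrt_pos.2 hD
    have hcB0 : (0:ℝ) < (Fintype.card (BF k') : ℝ) := by exact_mod_cast Fintype.card_pos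
    have hcap0 : ∀ f : BF k, 0 ≤ ∑ f₂, G f f₂ :=
      fun f => le_trans (abs_nonneg _) (TLB.leak_abs hw hGsymm f f)
    have hLdef : Ltot k k' w = (Fintype.card (BF k') : ℝ)⁻¹ *
        ∑ g' : BF k', ∑ f' ∈ Finset.univ.filter (fun f' : BF k' => 0 < dimB f'),
          |leakLift k k' w f' g'| := rfl
    have step1 : ∑ g' : BF k', ∑ f' ∈ Finset.univ.filter (fun f' : BF k' => 0 < dimB f'),
          |leakLift k k' w f' g'|
        ≤ ∑ g' : BF k', ∑ f' ∈ Finset.univ.filter (fun f' : BF k' => 0 < dimB f'),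
          ((Fintype.card (MParam k k') : ℝ)⁻¹ * ∑ f : BF k,
            |∑ p ∈ Finset.univ.filter (fun p : MParam k k' => applyB p f = f'),
              leak w f (sharpB p g')|) := by
      refine Finset.sum_le_sum (fun g' _ => Finset.sum_le_sum (fun f' _ => ?_))
      exact TLB.leakLift_le w f' g'
    have step2 : ∑ g' : BF k', ∑ f' ∈ Finset.univ.filter (fun f' : BF k' => 0 < dimB f'),
          ((Fintype.card (MParam k k') : ℝ)⁻¹ * ∑ f : BF k,
            |∑ p ∈ Finset.univ.filter (fun p : MParam k k' => applyB p f = f'),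
              leak w f (sharpB p g')|)
        = (Fintype.card (MParam k k') : ℝ)⁻¹ *
          ∑ f' ∈ Finset.univ.filter (fun f' : BF k' => 0 < dimB f'), ∑ f : BF k,
            ∑ g' : BF k',
            |∑ p ∈ Finset.univ.filter (fun p : MParam k k' => applyB p f = f'),
              leak w f (sharpB p g')| := by
      rw [Finset.sum_congr rfl (fun g' (_ : g' ∈ Finset.univ) =>
        (Finset.mul_sum _ _ _).symm), ← Finset.mul_sum]
      congr 1
      rw [Finset.sum_comm]
      exact Finset.sum_congr rfl (fun f' _ => Finset.sum_comm)
    have step3 : ∑ f' ∈ Finset.univ.filter (fun f' : BF k' => 0 < dimB f'), ∑ f : BF k,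
          ∑ g' : BF k',
          |∑ p ∈ Finset.univ.filter (fun p : MParam k k' => applyB p f = f'),
            leak w f (sharpB p g')|
        ≤ ∑ f' ∈ Finset.univ.filter (fun f' : BF k' => 0 < dimB f'), ∑ f : BF k,
          ((Fintype.card (BF k') : ℝ) * ((∑ f₂, G f f₂) *
            ((2:ℝ)^k * ((Finset.univ.filter
              (fun p : MParam k k' => applyB p f = f')).card : ℝ))
            / Real.sqrt ((2:ℝ)^k' - 2^k))) := by
      refine Finset.sum_le_sum (fun f' hf' => Finset.sum_le_sum (fun f _ => ?_))
      rw [Finset.mem_filter] at hf'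
      exact TLB.avg_abs_bound hw hGsymm f f' hf'.2 hkk
    have step4 : ∑ f' ∈ Finset.univ.filter (fun f' : BF k' => 0 < dimB f'), ∑ f : BF k,
          ((Fintype.card (BF k') : ℝ) * ((∑ f₂, G f f₂) *
            ((2:ℝ)^k * ((Finset.univ.filter
              (fun p : MParam k k' => applyB p f = f')).card : ℝ))
            / Real.sqrt ((2:ℝ)^k' - 2^k)))
        ≤ (Fintype.card (BF k') : ℝ) * ((2:ℝ)^k / Real.sqrt ((2:ℝ)^k' - 2^k))
            * (Fintype.card (MParam k k') : ℝ) * 2 := by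
      rw [Finset.sum_comm]
      have hperf : ∀ f : BF k,
          ∑ f' ∈ Finset.univ.filter (fun f' : BF k' => 0 < dimB f'),
            ((Fintype.card (BF k') : ℝ) * ((∑ f₂, G f f₂) *
              ((2:ℝ)^k * ((Finset.univ.filter
                (fun p : MParam k k' => applyB p f = f')).card : ℝ))
              / Real.sqrt ((2:ℝ)^k' - 2^k)))
          ≤ ((Fintype.card (BF k') : ℝ) * (∑ f₂, G f f₂) * (2:ℝ)^k
              / Real.sqrt ((2:ℝ)^k' - 2^k)) * (Fintype.card (MParam k k') : ℝ) := by
        intro f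
        have hrw : ∀ f' : BF k',
            (Fintype.card (BF k') : ℝ) * ((∑ f₂, G f f₂) *
              ((2:ℝ)^k * ((Finset.univ.filter
                (fun p : MParam k k' => applyB p f = f')).card : ℝ))
              / Real.sqrt ((2:ℝ)^k' - 2^k))
            = ((Fintype.card (BF k') : ℝ) * (∑ f₂, G f f₂) * (2:ℝ)^k
                / Real.sqrt ((2:ℝ)^k' - 2^k)) *
              ((Finset.univ.filter
                (fun p : MParam k k' => applyB p f = f')).card : ℝ) := by
          intro f'
          ring
        rw [Finset.sum_congr rfl (fun f' _ => hrw f'), ← Finset.mul_sum]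
        have hc0 : 0 ≤ (Fintype.card (BF k') : ℝ) * (∑ f₂, G f f₂) * (2:ℝ)^k
            / Real.sqrt ((2:ℝ)^k' - 2^k) := by
          apply div_nonneg _ hsD.le
          apply mul_nonneg (mul_nonneg hcB0.le (hcap0 f))
          positivity
        apply mul_le_mul_of_nonneg_left _ hc0
        calc ∑ f' ∈ Finset.univ.filter (fun f' : BF k' => 0 < dimB f'),
              ((Finset.univ.filter
                (fun p : MParam k k' => applyB p f = f')).card : ℝ)
            ≤ ∑ f' : BF k',
              ((Finset.univ.filter
                (fun p : MParam k k' => applyB p f = f')).card : ℝ) :=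
              Finset.sum_le_sum_of_subset_of_nonneg (Finset.filter_subset _ _)
                (fun f' _ _ => Nat.cast_nonneg _)
          _ = (Fintype.card (MParam k k') : ℝ) := by
              rw [← Nat.cast_sum, TLB.sum_card_N f]
      calc ∑ f : BF k, ∑ f' ∈ Finset.univ.filter (fun f' : BF k' => 0 < dimB f'),
            ((Fintype.card (BF k') : ℝ) * ((∑ f₂, G f f₂) *
              ((2:ℝ)^k * ((Finset.univ.filter
                (fun p : MParam k k' => applyB p f = f')).card : ℝ))
              / Real.sqrt ((2:ℝ)^k' - 2^k)))
          ≤ ∑ f : BF k, ((Fintype.card (BF k') : ℝ) * (∑ f₂, G f f₂) * (2:ℝ)^k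
              / Real.sqrt ((2:ℝ)^k' - 2^k)) * (Fintype.card (MParam k k') : ℝ) :=
            Finset.sum_le_sum (fun f _ => hperf f)
        _ = ((Fintype.card (BF k') : ℝ) * (2:ℝ)^k
              / Real.sqrt ((2:ℝ)^k' - 2^k)) * (Fintype.card (MParam k k') : ℝ)
              * ∑ f : BF k, (∑ f₂, G f f₂) := by
            rw [Finset.mul_sum]
            exact Finset.sum_congr rfl (fun f _ => by ring)
        _ = (Fintype.card (BF k') : ℝ) * ((2:ℝ)^k / Real.sqrt ((2:ℝ)^k' - 2^k))
              * (Fintype.card (MParam k k') : ℝ) * 2 := by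
            rw [hcapsum]
            ring
    -- combine
    have hminv : ((Fintype.card (MParam k k') : ℝ))⁻¹ * (Fintype.card (MParam k k') : ℝ) ≤ 1 := by
      rcases eq_or_ne ((Fintype.card (MParam k k') : ℝ)) 0 with h0 | h0
      · rw [h0, mul_zero]; norm_num
      · rw [inv_mul_cancel₀ h0]
    have hfinal : Ltot k k' w ≤ (2:ℝ)^k * 2 / Real.sqrt ((2:ℝ)^k' - 2^k) := by
      rw [hLdef]
      have hchain : ∑ g' : BF k', ∑ f' ∈ Finset.univ.filter (fun f' : BF k' => 0 < dimB f'),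
            |leakLift k k' w f' g'|
          ≤ (Fintype.card (MParam k k') : ℝ)⁻¹ *
            ((Fintype.card (BF k') : ℝ) * ((2:ℝ)^k / Real.sqrt ((2:ℝ)^k' - 2^k))
              * (Fintype.card (MParam k k') : ℝ) * 2) := by
        refine le_trans step1 ?_
        rw [step2]
        apply mul_le_mul_of_nonneg_left _ (inv_nonneg.2 (Nat.cast_nonneg _))
        exact le_trans step3 step4
      calc (Fintype.card (BF k') : ℝ)⁻¹ *
            ∑ g' : BF k', ∑ f' ∈ Finset.univ.filter (fun f' : BF k' => 0 < dimB f'),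
              |leakLift k k' w f' g'|
          ≤ (Fintype.card (BF k') : ℝ)⁻¹ *
            ((Fintype.card (MParam k k') : ℝ)⁻¹ *
              ((Fintype.card (BF k') : ℝ) * ((2:ℝ)^k / Real.sqrt ((2:ℝ)^k' - 2^k))
                * (Fintype.card (MParam k k') : ℝ) * 2)) :=
            mul_le_mul_of_nonneg_left hchain (inv_nonneg.2 hcB0.le)
        _ = ((Fintype.card (BF k') : ℝ)⁻¹ * (Fintype.card (BF k') : ℝ))
              * (((Fintype.card (MParam k k') : ℝ))⁻¹ * (Fintype.card (MParam k k') : ℝ))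
              * (((2:ℝ)^k / Real.sqrt ((2:ℝ)^k' - 2^k)) * 2) := by ring
        _ ≤ 1 * 1 * (((2:ℝ)^k / Real.sqrt ((2:ℝ)^k' - 2^k)) * 2) := by
            apply mul_le_mul_of_nonneg_right
            · rw [inv_mul_cancel₀ hcB0.ne']
              apply mul_le_mul_of_nonneg_left hminv
              norm_num
            · apply mul_nonneg _ (by norm_num)
              apply div_nonneg _ hsD.le
              positivity
        _ = (2:ℝ)^k * 2 / Real.sqrt ((2:ℝ)^k' - 2^k) := by ring
    refine le_trans hfinal ?_
    rw [div_le_div_iff₀ hsD hsD]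
    have hpow : (2:ℝ)^k * 2 ≤ (2:ℝ)^(2^k + k) := by
      have h1 : (2:ℝ)^k * 2 = 2^(k+1) := by ring
      rw [h1]
      apply pow_le_pow_right₀ one_le_two
      have := Nat.one_le_two_pow (n := k)
      omega
    apply mul_le_mul_of_nonneg_right hpow hsD.le
  refine ⟨hmain, ?_⟩
  have h0 : ∀ k', 0 ≤ Ltot k k' w := by
    intro k'
    apply mul_nonneg (inv_nonneg.2 (Nat.cast_nonneg _))
    exact Finset.sum_nonneg (fun g' _ =>
      Finset.sum_nonneg (fun f' _ => abs_nonneg _))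
  have hup : Filter.Tendsto
      (fun k' : ℕ => (2:ℝ)^(2^k + k) / Real.sqrt ((2:ℝ)^k' - 2^k))
      Filter.atTop (nhds 0) := by
    have h1 : Filter.Tendsto (fun k' : ℕ => (2:ℝ)^k' - 2^k) Filter.atTop Filter.atTop := by
      have := Filter.tendsto_atTop_add_const_right Filter.atTop (-(2:ℝ)^k)
        (tendsto_pow_atTop_atTop_of_one_lt (one_lt_two (α := ℝ)))
      simpa [sub_eq_add_neg] using this
    have hsq : Filter.Tendsto Real.sqrt Filter.atTop Filter.atTop := by
      rw [Filter.tendsto_atTop_atTop]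
      intro b
      refine ⟨b^2, fun a ha => ?_⟩
      have h2 : Real.sqrt (b^2) ≤ Real.sqrt a := Real.sqrt_le_sqrt ha
      rw [Real.sqrt_sq_eq_abs] at h2
      exact le_trans (le_abs_self b) h2
    have h3 : Filter.Tendsto (fun k' : ℕ => Real.sqrt ((2:ℝ)^k' - 2^k))
        Filter.atTop Filter.atTop := hsq.comp h1
    have h4 := h3.inv_tendsto_atTop
    have h5 := Filter.Tendsto.const_mul ((2:ℝ)^(2^k + k)) h4
    rw [mul_zero] at h5
    convert h5 using 2 with k'
    exact div_eq_mul_inv _ _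
  apply tendsto_of_tendsto_of_tendsto_of_le_of_le' tendsto_const_nhds hup
  · exact Filter.Eventually.of_forall h0
  · rw [Filter.eventually_atTop]
    exact ⟨k + 1, fun k' hk' => hmain k' (by omega)⟩


end
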